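/- For the instanton connection ρ on O(S^4_θ) ⊂ O(S^7_θ) and the conformal generators 𝒯_σ of so_θ(5,1), the variation of the curvature on the generators of Der(O(S^4_θ)) is (δ_σ Ω)(T_μ, T_ν) = −2 b_σ Ω(T_μ, T_ν) − T_σ(b_μ) ω(𝒯_ν) + λ^{2μ∧ν} T_σ(b_ν) ω(𝒯_μ), where δ_σ Ω(T_μ,T_ν) = [𝒯_σ, Ω(T_μ,T_ν)] − Ω([T_σ,T_μ], T_ν) + λ^{2μ∧ν} Ω([T_σ,T_ν], T_μ). -/

import Mathlib

/-!
STATEMENT 10: for the instanton connection `ρ` on `O(S^4_θ) ⊂ O(S^7_θ)` and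
the conformal generators `𝒯_σ` of `so_θ(5,1)`, the variation of the curvature
on the generators of `Der(O(S^4_θ))` is
`(δ_σ Ω)(T_μ, T_ν) = −2 b_σ Ω(T_μ, T_ν) − T_σ(b_μ) ω(𝒯_ν)
   + λ^{2μ∧ν} T_σ(b_ν) ω(𝒯_μ)`,
where
`δ_σ Ω(T_μ,T_ν) = [𝒯_σ, Ω(T_μ,T_ν)] − Ω([T_σ,T_μ], T_ν)
   + λ^{2μ∧ν} Ω([T_σ,T_ν], T_μ)`.

`O(S^7_θ)` is modelled as a `ℂ`-algebra `A` graded by the (doubled) torus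
weight lattice; `O(S^4_θ)` is generated by the `b_μ`,
`μ ∈ V = {(0,0),(±1,0),(0,±1)}`; the equivariant derivations `L_{μ,ν}` and
the conformal derivations `𝒯_σ` (with `𝒯_σ^π = T_σ`, `Σ_τ b_τ* 𝒯_τ = 0`,
`[𝒯_μ,𝒯_ν] = L_{μ,ν}`, `[L_{μ,ν},𝒯_σ] = δ_{σ*ν}𝒯_μ − λ^{2μ∧ν}δ_{σ*μ}𝒯_ν`)
are braided derivations.  The connection is `ρ(T_ν) := Σ_μ b_μ* L_{μ,ν}`,
the vertical projection `ω(𝒯_ν) = 𝒯_ν − ρ(T_ν)`, the curvature on generators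
`Ω(T_μ,T_ν) = −Y_{μ,ν} = −ω(L_{μ,ν})`; brackets of the form `[𝒯_σ, ·]` are
braided commutators (with factor `λ^{2σ∧(μ+ν)}`), `Ω` is extended to the
arguments `[T_σ,T_μ] = b_σ T_μ − λ^{2σ∧μ} b_μ T_σ` by left
`O(S^4_θ)`-linearity, and `T_σ(b_μ) ω(𝒯_ν)` uses the left module structure
on derivations.
-/

noncomputable section

open scoped BigOperators

namespace Statement10

/-- the five weights `{(0,0),(±1,0),(0,±1)}` -/
def V : Finset (ℤ × ℤ) := {(0,0), (1,0), (-1,0), (0,1), (0,-1)}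

/-- `μ∧ν := μ₁ν₂ − μ₂ν₁` -/
def wedge (p r : ℤ × ℤ) : ℤ := p.1 * r.2 - p.2 * r.1

/-- `λ^{2 μ∧ν}` with `λ = e^{−πiθ}` -/
def q (θ : ℝ) (p r : ℤ × ℤ) : ℂ :=
  Complex.exp (-((Real.pi : ℂ) * Complex.I) * (θ : ℂ) * ((2 * wedge p r : ℤ) : ℂ))

/-- the doubled weight `2μ` (the generators `z_r` of `O(S^7_θ)` have
half-integral weights, so the grading uses doubled weights) -/
def dbl (p : ℤ × ℤ) : ℤ × ℤ := (2 * p.1, 2 * p.2)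

/-- the braiding factor between homogeneous elements of (doubled) weights
`m`, `m'`; on the subalgebra `O(S^4_θ)`, `Q7 θ (dbl μ) (dbl ν) = λ^{2μ∧ν}`. -/
def Q7 (θ : ℝ) (m m' : ℤ × ℤ) : ℂ :=
  Complex.exp (-((Real.pi : ℂ) * Complex.I) * (θ : ℂ) * (((wedge m m' : ℤ) : ℂ) / 2))


lemma q_mul (θ : ℝ) (a b c d e f : ℤ × ℤ) (h : wedge a b + wedge c d = wedge e f) :
    q θ a b * q θ c d = q θ e f := by
  unfold q
  rw [← Complex.exp_add]
  congr 1
  have h' : ((wedge a b : ℤ) : ℂ) + ((wedge c d : ℤ) : ℂ) = ((wedge e f : ℤ) : ℂ) := by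
    exact_mod_cast congrArg (fun n : ℤ => (n : ℂ)) h
  push_cast
  linear_combination (-2 * (Real.pi : ℂ) * Complex.I * (θ : ℂ)) * h'

lemma q_one (θ : ℝ) (a b : ℤ × ℤ) (h : wedge a b = 0) : q θ a b = 1 := by
  simp [q, h]

lemma q_congr (θ : ℝ) (a b e f : ℤ × ℤ) (h : wedge a b = wedge e f) :
    q θ a b = q θ e f := by simp [q, h]

lemma q_mul_symm (θ : ℝ) (a b : ℤ × ℤ) : q θ a b * q θ b a = 1 := by
  rw [q_mul θ a b b a a a (by unfold wedge; ring)]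
  exact q_one θ a a (by unfold wedge; ring)

lemma q_neg_cancel (θ : ℝ) (a c : ℤ × ℤ) : q θ a c * q θ (-a) c = 1 := by
  rw [q_mul θ a c (-a) c a a (by simp only [wedge, Prod.fst_neg, Prod.snd_neg]; ring)]
  exact q_one θ a a (by unfold wedge; ring)

lemma q_neg_cancel' (θ : ℝ) (a c : ℤ × ℤ) : q θ a c * q θ a (-c) = 1 := by
  rw [q_mul θ a c a (-c) a a (by simp only [wedge, Prod.fst_neg, Prod.snd_neg]; ring)]
  exact q_one θ a a (by unfold wedge; ring)

lemma q_add_left (θ : ℝ) (a b c : ℤ × ℤ) : q θ (a + b) c = q θ a c * q θ b c := by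
  rw [q_mul θ a c b c (a + b) c
    (by simp only [wedge, Prod.fst_add, Prod.snd_add]; ring)]

lemma q_add_right (θ : ℝ) (a b c : ℤ × ℤ) : q θ a (b + c) = q θ a b * q θ a c := by
  rw [q_mul θ a b a c a (b + c)
    (by simp only [wedge, Prod.fst_add, Prod.snd_add]; ring)]

lemma Q7_dbl (θ : ℝ) (a b : ℤ × ℤ) : Q7 θ (dbl a) (dbl b) = q θ a b := by
  unfold Q7 q
  congr 1
  simp only [dbl, wedge]
  push_cast
  ring

theorem conformal_variation_of_curvature
    (θ : ℝ)
    (A : Type*) [Ring A] [Algebra ℂ A]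
    (𝒜 : ℤ × ℤ → Submodule ℂ A) [GradedAlgebra 𝒜]
    -- generators `b_μ` of the coinvariant subalgebra `O(S^4_θ)` (`b_μ* = b_{−μ}`)
    (b : ℤ × ℤ → A)
    (hb : ∀ μ ∈ V, b μ ∈ 𝒜 (dbl μ))
    (hcomm : ∀ μ ∈ V, ∀ ν ∈ V, b μ * b ν = q θ μ ν • (b ν * b μ))
    (hsph : ∑ μ ∈ V, b (-μ) * b μ = 1)
    -- the `O(SU(2))`-equivariant braided derivations `L_{μ,ν}` of `O(S^7_θ)`
    (L : ℤ × ℤ → ℤ × ℤ → Module.End ℂ A)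
    (hanti : ∀ μ ∈ V, ∀ ν ∈ V, L μ ν = -(q θ μ ν) • L ν μ)
    (hLval : ∀ μ ∈ V, ∀ ν ∈ V, ∀ σ ∈ V,
      L μ ν (b σ) = (if σ = -ν then (1:ℂ) else 0) • b μ
        - q θ μ ν • ((if σ = -μ then (1:ℂ) else 0) • b ν))
    (hLeib : ∀ μ ∈ V, ∀ ν ∈ V, ∀ (m : ℤ × ℤ) (x y : A), x ∈ 𝒜 m →
      L μ ν (x * y) = L μ ν x * y + Q7 θ (dbl μ + dbl ν) m • (x * L μ ν y))
    -- the `so_θ(5)` relations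
    (hLrel : ∀ μ ∈ V, ∀ ν ∈ V, ∀ τ ∈ V, ∀ σ ∈ V,
      L μ ν ∘ₗ L τ σ - q θ (μ + ν) (τ + σ) • (L τ σ ∘ₗ L μ ν)
        = (if τ = -ν then (1:ℂ) else 0) • L μ σ
          - q θ μ ν • ((if τ = -μ then (1:ℂ) else 0) • L ν σ)
          - q θ τ σ • ((if σ = -ν then (1:ℂ) else 0) • L μ τ
              - q θ μ ν • ((if σ = -μ then (1:ℂ) else 0) • L ν τ)))
    -- the horizontal lifts `ρ(T_ν) := Σ_μ b_μ* L_{μ,ν}`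
    (rhoT : ℤ × ℤ → Module.End ℂ A)
    (hrho : ∀ ν, rhoT ν = ∑ μ ∈ V, (LinearMap.mulLeft ℂ (b (-μ))) ∘ₗ L μ ν)
    -- the vertical (gauge) generators `Y_{μ,ν}`
    (Y : ℤ × ℤ → ℤ × ℤ → Module.End ℂ A)
    (hYdef : ∀ μ ν, Y μ ν = ∑ γ ∈ V,
      (LinearMap.mulLeft ℂ (b (-γ))) ∘ₗ
        ((LinearMap.mulLeft ℂ (b γ)) ∘ₗ L μ ν
          - q θ γ μ • ((LinearMap.mulLeft ℂ (b μ)) ∘ₗ L γ ν)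
          + q θ (γ + μ) ν • ((LinearMap.mulLeft ℂ (b ν)) ∘ₗ L γ μ)))
    -- the conformal derivations `𝒯_σ` of `so_θ(5,1)` on `O(S^7_θ)`
    (Tc : ℤ × ℤ → Module.End ℂ A)
    (hTcLeib : ∀ σ ∈ V, ∀ (m : ℤ × ℤ) (x y : A), x ∈ 𝒜 m →
      Tc σ (x * y) = Tc σ x * y + Q7 θ (dbl σ) m • (x * Tc σ y))
    -- `𝒯_σ^π = T_σ`, i.e. on `O(S^4_θ)` they give the sphere derivations
    (hTcval : ∀ σ ∈ V, ∀ τ ∈ V, Tc σ (b τ) = (if σ = -τ then 1 else 0) - b σ * b τ)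
    -- `Σ_τ b_τ* 𝒯_τ = 0`
    (hTcsum : (∑ τ ∈ V, (LinearMap.mulLeft ℂ (b (-τ))) ∘ₗ Tc τ) = 0)
    -- `[𝒯_μ, 𝒯_ν] = L_{μ,ν}`
    (hTT : ∀ μ ∈ V, ∀ ν ∈ V, Tc μ ∘ₗ Tc ν - q θ μ ν • (Tc ν ∘ₗ Tc μ) = L μ ν)
    -- `[L_{μ,ν}, 𝒯_σ] = δ_{σ*ν} 𝒯_μ − λ^{2μ∧ν} δ_{σ*μ} 𝒯_ν`
    (hLT : ∀ μ ∈ V, ∀ ν ∈ V, ∀ σ ∈ V,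
      L μ ν ∘ₗ Tc σ - q θ (μ + ν) σ • (Tc σ ∘ₗ L μ ν)
        = (if σ = -ν then (1:ℂ) else 0) • Tc μ
          - q θ μ ν • ((if σ = -μ then (1:ℂ) else 0) • Tc ν))
    -- the curvature on generators, `Ω(T_μ,T_ν) = −Y_{μ,ν}`
    (Om : ℤ × ℤ → ℤ × ℤ → Module.End ℂ A)
    (hOm : ∀ μ ν, Om μ ν = - Y μ ν) :
    -- `(δ_σ Ω)(T_μ,T_ν) = [𝒯_σ, Ω(T_μ,T_ν)] − Ω([T_σ,T_μ],T_ν)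
    --    + λ^{2μ∧ν} Ω([T_σ,T_ν],T_μ)
    --  = −2 b_σ Ω(T_μ,T_ν) − T_σ(b_μ) ω(𝒯_ν) + λ^{2μ∧ν} T_σ(b_ν) ω(𝒯_μ)`,
    -- where `ω(𝒯_ν) = 𝒯_ν − ρ(T_ν)` and `Ω([T_σ,T_μ],T_ν)
    --    = b_σ Ω(T_μ,T_ν) − λ^{2σ∧μ} b_μ Ω(T_σ,T_ν)`
    ∀ σ ∈ V, ∀ μ ∈ V, ∀ ν ∈ V,
      (Tc σ ∘ₗ Om μ ν - q θ σ (μ + ν) • (Om μ ν ∘ₗ Tc σ))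
        - ((LinearMap.mulLeft ℂ (b σ)) ∘ₗ Om μ ν
            - q θ σ μ • ((LinearMap.mulLeft ℂ (b μ)) ∘ₗ Om σ ν))
        + q θ μ ν • ((LinearMap.mulLeft ℂ (b σ)) ∘ₗ Om ν μ
            - q θ σ ν • ((LinearMap.mulLeft ℂ (b ν)) ∘ₗ Om σ μ))
      = (-2 : ℂ) • ((LinearMap.mulLeft ℂ (b σ)) ∘ₗ Om μ ν)
        - (LinearMap.mulLeft ℂ (Tc σ (b μ))) ∘ₗ (Tc ν - rhoT ν)
        + q θ μ ν • ((LinearMap.mulLeft ℂ (Tc σ (b ν))) ∘ₗ (Tc μ - rhoT μ)) := by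
  intro σ hσ μ hμ ν hν
  have hVneg : ∀ p ∈ V, -p ∈ V := by decide
  have hσ' : -σ ∈ V := hVneg σ hσ
  -- basic facts about left multiplication operators
  have Bmul : ∀ x y : A, LinearMap.mulLeft ℂ (x * y)
      = LinearMap.mulLeft ℂ x * LinearMap.mulLeft ℂ y := fun x y =>
    LinearMap.ext fun z => by
      simp [LinearMap.mulLeft_apply, Module.End.mul_apply, mul_assoc]
  have Bsmul : ∀ (r : ℂ) (x : A), LinearMap.mulLeft ℂ (r • x) = r • LinearMap.mulLeft ℂ x :=
    fun r x => LinearMap.ext fun z => by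
      simp [LinearMap.mulLeft_apply, smul_mul_assoc]
  have Bsub : ∀ x y : A, LinearMap.mulLeft ℂ (x - y)
      = LinearMap.mulLeft ℂ x - LinearMap.mulLeft ℂ y := fun x y =>
    LinearMap.ext fun z => by simp [LinearMap.mulLeft_apply, sub_mul]
  have Bneg : ∀ x : A, LinearMap.mulLeft ℂ (-x) = -LinearMap.mulLeft ℂ x := fun x =>
    LinearMap.ext fun z => by simp [LinearMap.mulLeft_apply]
  have Bone : LinearMap.mulLeft ℂ (1 : A) = 1 := LinearMap.ext fun z => by
    simp [LinearMap.mulLeft_apply]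
  have Bsum : ∀ f : ℤ × ℤ → A, LinearMap.mulLeft ℂ (∑ γ ∈ V, f γ)
      = ∑ γ ∈ V, LinearMap.mulLeft ℂ (f γ) := fun f =>
    LinearMap.ext fun z => by
      simp [LinearMap.mulLeft_apply, LinearMap.sum_apply, Finset.sum_mul]
  -- multiplicative rho
  have hrho' : ∀ c, rhoT c = ∑ γ ∈ V, LinearMap.mulLeft ℂ (b (-γ)) * L γ c := by
    intro c; rw [hrho c]; rfl
  have hTcsum' : (∑ τ ∈ V, LinearMap.mulLeft ℂ (b (-τ)) * Tc τ) = 0 := by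
    rw [← hTcsum]; rfl
  -- operator form of the braided Leibniz rule for the conformal derivations
  have hTM : ∀ s ∈ V, ∀ τ ∈ V, Tc s * LinearMap.mulLeft ℂ (b τ)
      = LinearMap.mulLeft ℂ (Tc s (b τ)) + q θ s τ • (LinearMap.mulLeft ℂ (b τ) * Tc s) := by
    intro s hs τ hτ
    apply LinearMap.ext; intro x
    simp only [Module.End.mul_apply, LinearMap.mulLeft_apply, LinearMap.add_apply,
      LinearMap.smul_apply]
    rw [hTcLeib s hs (dbl τ) (b τ) x (hb τ hτ), Q7_dbl]
  -- braided commutativity, operator versions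
  have hqb : ∀ a ∈ V, ∀ c ∈ V, q θ a c • (b (-a) * b c) = b c * b (-a) := by
    intro a ha c hc
    rw [hcomm (-a) (hVneg a ha) c hc, smul_smul, q_neg_cancel, one_smul]
  have hqbOp : ∀ a ∈ V, ∀ c ∈ V, ∀ X : Module.End ℂ A,
      q θ a c • (LinearMap.mulLeft ℂ (b (-a)) * (LinearMap.mulLeft ℂ (b c) * X))
        = LinearMap.mulLeft ℂ (b c) * (LinearMap.mulLeft ℂ (b (-a)) * X) := by
    intro a ha c hc X
    rw [← mul_assoc, ← Bmul, ← smul_mul_assoc, ← Bsmul, hqb a ha c hc, Bmul, mul_assoc]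
  have hswap : ∀ a ∈ V, ∀ c ∈ V, ∀ X : Module.End ℂ A,
      LinearMap.mulLeft ℂ (b a) * (LinearMap.mulLeft ℂ (b c) * X)
        = q θ a c • (LinearMap.mulLeft ℂ (b c) * (LinearMap.mulLeft ℂ (b a) * X)) := by
    intro a ha c hc X
    rw [← mul_assoc, ← Bmul, hcomm a ha c hc, Bsmul, smul_mul_assoc, Bmul, mul_assoc]
  -- simplified form of the gauge generators
  have hY' : ∀ a ∈ V, ∀ c ∈ V, Y a c
      = L a c - LinearMap.mulLeft ℂ (b a) * rhoT c
        + q θ a c • (LinearMap.mulLeft ℂ (b c) * rhoT a) := by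
    intro a ha c hc
    have e0 : Y a c = ∑ γ ∈ V, LinearMap.mulLeft ℂ (b (-γ)) *
        (LinearMap.mulLeft ℂ (b γ) * L a c
          - q θ γ a • (LinearMap.mulLeft ℂ (b a) * L γ c)
          + q θ (γ + a) c • (LinearMap.mulLeft ℂ (b c) * L γ a)) := by
      rw [hYdef a c]; rfl
    rw [e0]
    calc ∑ γ ∈ V, LinearMap.mulLeft ℂ (b (-γ)) *
          (LinearMap.mulLeft ℂ (b γ) * L a c
            - q θ γ a • (LinearMap.mulLeft ℂ (b a) * L γ c)
            + q θ (γ + a) c • (LinearMap.mulLeft ℂ (b c) * L γ a))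
        = ∑ γ ∈ V, (LinearMap.mulLeft ℂ (b (-γ) * b γ) * L a c
            - LinearMap.mulLeft ℂ (b a) * (LinearMap.mulLeft ℂ (b (-γ)) * L γ c)
            + q θ a c • (LinearMap.mulLeft ℂ (b c) * (LinearMap.mulLeft ℂ (b (-γ)) * L γ a))) := by
          refine Finset.sum_congr rfl fun γ hγ => ?_
          rw [mul_add, mul_sub]
          congr 1
          · congr 1
            · rw [← mul_assoc, ← Bmul]
            · rw [mul_smul_comm, hqbOp γ hγ a ha]
          · rw [mul_smul_comm, q_add_left θ γ a c, mul_comm (q θ γ c) (q θ a c), mul_smul,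
              hqbOp γ hγ c hc]
      _ = (∑ γ ∈ V, LinearMap.mulLeft ℂ (b (-γ) * b γ)) * L a c
            - LinearMap.mulLeft ℂ (b a) * ∑ γ ∈ V, LinearMap.mulLeft ℂ (b (-γ)) * L γ c
            + q θ a c • (LinearMap.mulLeft ℂ (b c) *
                ∑ γ ∈ V, LinearMap.mulLeft ℂ (b (-γ)) * L γ a) := by
          rw [Finset.sum_add_distrib, Finset.sum_sub_distrib, ← Finset.sum_mul,
            ← Finset.mul_sum, ← Finset.smul_sum, ← Finset.mul_sum]
      _ = L a c - LinearMap.mulLeft ℂ (b a) * rhoT c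
            + q θ a c • (LinearMap.mulLeft ℂ (b c) * rhoT a) := by
          rw [← Bsum (fun γ => b (-γ) * b γ), hsph, Bone, one_mul, ← hrho', ← hrho']
  -- curvature in terms of the connection
  have hOm' : ∀ a ∈ V, ∀ c ∈ V, Om a c
      = -L a c + LinearMap.mulLeft ℂ (b a) * rhoT c
        - q θ a c • (LinearMap.mulLeft ℂ (b c) * rhoT a) := by
    intro a ha c hc
    rw [hOm a c, hY' a ha c hc]
    module
  have hq1 : q θ μ ν * q θ ν μ = 1 := q_mul_symm θ μ ν
  have hOmvm : q θ μ ν • Om ν μ = -Om μ ν := by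
    rw [hOm' ν hν μ hμ, hOm' μ hμ ν hν, hanti ν hν μ hμ]
    match_scalars <;>
      first
        | ring1
        | linear_combination hq1
        | linear_combination (-1 : ℂ) * hq1
  -- braided commutator of `Tc σ` with the `L`'s
  have hTcL : ∀ a ∈ V, ∀ c ∈ V, Tc σ * L a c
      = (q θ σ a * q θ σ c) • (L a c * Tc σ)
        - (q θ a c * (if σ = -c then (1:ℂ) else 0)) • Tc a
        + (if σ = -a then (1:ℂ) else 0) • Tc c := by
    intro a ha c hc
    have h0 := hLT a ha c hc σ hσ
    simp only [← Module.End.mul_eq_comp] at h0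
    have h2 : q θ (a + c) σ • (Tc σ * L a c)
        = L a c * Tc σ - ((if σ = -c then (1:ℂ) else 0) • Tc a
            - q θ a c • ((if σ = -a then (1:ℂ) else 0) • Tc c)) := by
      rw [← h0]; module
    have h3 : Tc σ * L a c = q θ σ (a + c) • (L a c * Tc σ
        - ((if σ = -c then (1:ℂ) else 0) • Tc a
            - q θ a c • ((if σ = -a then (1:ℂ) else 0) • Tc c))) := by
      rw [← h2, smul_smul, q_mul_symm, one_smul]
    rw [h3]
    have e0 : q θ σ (a + c) = q θ σ a * q θ σ c := q_add_right θ σ a c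
    have e1 : q θ σ (a + c) * (if σ = -c then (1:ℂ) else 0)
        = q θ a c * (if σ = -c then (1:ℂ) else 0) := by
      split_ifs with h
      · rw [mul_one, mul_one, h]
        exact q_congr θ (-c) (a + c) a c
          (by simp only [wedge, Prod.fst_neg, Prod.snd_neg, Prod.fst_add, Prod.snd_add]; ring)
      · rw [mul_zero, mul_zero]
    have e2 : q θ σ (a + c) * (q θ a c * (if σ = -a then (1:ℂ) else 0))
        = (if σ = -a then (1:ℂ) else 0) := by
      split_ifs with h
      · simp only [mul_one]
        rw [h, q_mul θ (-a) (a + c) a c ((0:ℤ),(0:ℤ)) ((0:ℤ),(0:ℤ))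
          (by simp only [wedge, Prod.fst_neg, Prod.snd_neg, Prod.fst_add, Prod.snd_add]; ring)]
        exact q_one θ _ _ (by unfold wedge; ring)
      · simp only [mul_zero]
    match_scalars <;>
      first
        | ring1
        | linear_combination e0
        | linear_combination (-1 : ℂ) * e1
        | linear_combination e1
        | linear_combination e2
        | linear_combination (-1 : ℂ) * e2
  -- mulLeft of the values of the conformal derivations
  have hBT : ∀ a ∈ V, LinearMap.mulLeft ℂ (Tc σ (b a))
      = (if σ = -a then (1:ℂ) else 0) • 1
        - LinearMap.mulLeft ℂ (b σ) * LinearMap.mulLeft ℂ (b a) := by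
    intro a ha
    rw [hTcval σ hσ a ha]
    split_ifs with h
    · rw [Bsub, Bone, Bmul, one_smul]
    · rw [Bsub, Bmul, zero_smul, ← Bmul]
      congr 1
      exact LinearMap.ext fun z => by simp [LinearMap.mulLeft_apply]
  -- the commutator of `Tc σ` with the connection
  have hTR : ∀ c ∈ V, Tc σ * rhoT c
      = L σ c - LinearMap.mulLeft ℂ (b σ) * rhoT c + LinearMap.mulLeft ℂ (b σ) * Tc c
        + q θ σ c • (rhoT c * Tc σ) := by
    intro c hc
    have step : ∀ γ ∈ V, Tc σ * (LinearMap.mulLeft ℂ (b (-γ)) * L γ c)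
        = (if γ = σ then (1:ℂ) else 0) • L γ c
            - LinearMap.mulLeft ℂ (b σ) * (LinearMap.mulLeft ℂ (b (-γ)) * L γ c)
            + q θ σ c • ((LinearMap.mulLeft ℂ (b (-γ)) * L γ c) * Tc σ)
            - (if σ = -c then (1:ℂ) else 0) • (LinearMap.mulLeft ℂ (b (-γ)) * Tc γ)
            + (if σ = -γ then (1:ℂ) else 0) • (LinearMap.mulLeft ℂ (b (-γ)) * Tc c) := by
      intro γ hγ
      have hγ' := hVneg γ hγ
      have hBT' : LinearMap.mulLeft ℂ (Tc σ (b (-γ)))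
          = (if γ = σ then (1:ℂ) else 0) • 1
            - LinearMap.mulLeft ℂ (b σ) * LinearMap.mulLeft ℂ (b (-γ)) := by
        rw [hBT (-γ) hγ']
        congr 2
        simp only [neg_neg]
        by_cases h : σ = γ
        · rw [if_pos h, if_pos h.symm]
        · rw [if_neg h, if_neg (fun hh => h hh.symm)]
      have f1 : q θ σ (-γ) * (q θ σ γ * q θ σ c) = q θ σ c := by
        rw [← mul_assoc, q_mul θ σ (-γ) σ γ ((0:ℤ),(0:ℤ)) ((0:ℤ),(0:ℤ))
          (by simp only [wedge, Prod.fst_neg, Prod.snd_neg]; ring),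
          q_one θ _ _ (by unfold wedge; ring), one_mul]
      have f2 : q θ σ (-γ) * (q θ γ c * (if σ = -c then (1:ℂ) else 0))
          = (if σ = -c then (1:ℂ) else 0) := by
        split_ifs with h
        · simp only [mul_one]
          rw [h, q_mul θ (-c) (-γ) γ c ((0:ℤ),(0:ℤ)) ((0:ℤ),(0:ℤ))
            (by simp only [wedge, Prod.fst_neg, Prod.snd_neg]; ring)]
          exact q_one θ _ _ (by unfold wedge; ring)
        · simp only [mul_zero]
      have f3 : q θ σ (-γ) * (if σ = -γ then (1:ℂ) else 0)
          = (if σ = -γ then (1:ℂ) else 0) := by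
        split_ifs with h
        · rw [mul_one, h]
          exact q_one θ _ _ (by simp only [wedge, Prod.fst_neg, Prod.snd_neg]; ring)
        · rw [mul_zero]
      rw [← mul_assoc, hTM σ hσ (-γ) hγ', hBT', add_mul, smul_mul_assoc,
        mul_assoc (LinearMap.mulLeft ℂ (b (-γ))) (Tc σ) (L γ c), hTcL γ hγ c hc]
      simp only [sub_mul, add_mul, mul_add, mul_sub, smul_mul_assoc, mul_smul_comm,
        one_mul, mul_one, mul_assoc]
      match_scalars <;>
        first
          | ring1
          | linear_combination f1
          | linear_combination (-1 : ℂ) * f1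
          | linear_combination f2
          | linear_combination (-1 : ℂ) * f2
          | linear_combination f3
          | linear_combination (-1 : ℂ) * f3
    have s1 : ∑ γ ∈ V, (if γ = σ then (1:ℂ) else 0) • L γ c = L σ c := by
      rw [Finset.sum_congr rfl (fun γ (_ : γ ∈ V) =>
        show (if γ = σ then (1:ℂ) else 0) • L γ c = (if γ = σ then L σ c else 0) from by
          by_cases h : γ = σ
          · rw [if_pos h, if_pos h, h, one_smul]
          · rw [if_neg h, if_neg h, zero_smul]),
        Finset.sum_ite_eq' V σ (fun _ => L σ c), if_pos hσ]
    have s5 : ∑ γ ∈ V, (if σ = -γ then (1:ℂ) else 0) • (LinearMap.mulLeft ℂ (b (-γ)) * Tc c)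
        = LinearMap.mulLeft ℂ (b σ) * Tc c := by
      rw [Finset.sum_congr rfl (fun γ (_ : γ ∈ V) =>
        show (if σ = -γ then (1:ℂ) else 0) • (LinearMap.mulLeft ℂ (b (-γ)) * Tc c)
            = (if γ = -σ then LinearMap.mulLeft ℂ (b σ) * Tc c else 0) from by
          by_cases h : γ = -σ
          · rw [if_pos h, h, neg_neg, if_pos rfl, one_smul]
          · rw [if_neg h, if_neg (fun hh => h (by rw [hh, neg_neg])), zero_smul]),
        Finset.sum_ite_eq' V (-σ) (fun _ => LinearMap.mulLeft ℂ (b σ) * Tc c), if_pos hσ']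
    calc Tc σ * rhoT c = ∑ γ ∈ V, Tc σ * (LinearMap.mulLeft ℂ (b (-γ)) * L γ c) := by
          rw [hrho' c, Finset.mul_sum]
      _ = ∑ γ ∈ V, ((if γ = σ then (1:ℂ) else 0) • L γ c
            - LinearMap.mulLeft ℂ (b σ) * (LinearMap.mulLeft ℂ (b (-γ)) * L γ c)
            + q θ σ c • ((LinearMap.mulLeft ℂ (b (-γ)) * L γ c) * Tc σ)
            - (if σ = -c then (1:ℂ) else 0) • (LinearMap.mulLeft ℂ (b (-γ)) * Tc γ)
            + (if σ = -γ then (1:ℂ) else 0) • (LinearMap.mulLeft ℂ (b (-γ)) * Tc c)) :=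
          Finset.sum_congr rfl step
      _ = L σ c - LinearMap.mulLeft ℂ (b σ) * rhoT c + LinearMap.mulLeft ℂ (b σ) * Tc c
            + q θ σ c • (rhoT c * Tc σ) := by
          rw [Finset.sum_add_distrib, Finset.sum_sub_distrib, Finset.sum_add_distrib,
            Finset.sum_sub_distrib, s1, s5, ← Finset.mul_sum, ← Finset.smul_sum,
            ← Finset.sum_mul, ← Finset.smul_sum, hTcsum', smul_zero, ← hrho' c]
          module
  -- the commutator of `Tc σ` with `b_a • rho_c`
  have hB : ∀ a ∈ V, ∀ c ∈ V, Tc σ * (LinearMap.mulLeft ℂ (b a) * rhoT c)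
      = (if σ = -a then (1:ℂ) else 0) • rhoT c
        - LinearMap.mulLeft ℂ (b σ) * (LinearMap.mulLeft ℂ (b a) * rhoT c)
        + q θ σ a • (LinearMap.mulLeft ℂ (b a) * L σ c)
        - q θ σ a • (LinearMap.mulLeft ℂ (b a) * (LinearMap.mulLeft ℂ (b σ) * rhoT c))
        + q θ σ a • (LinearMap.mulLeft ℂ (b a) * (LinearMap.mulLeft ℂ (b σ) * Tc c))
        + (q θ σ a * q θ σ c) • ((LinearMap.mulLeft ℂ (b a) * rhoT c) * Tc σ) := by
    intro a ha c hc
    rw [← mul_assoc, hTM σ hσ a ha, hBT a ha, add_mul, smul_mul_assoc,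
      mul_assoc (LinearMap.mulLeft ℂ (b a)) (Tc σ) (rhoT c), hTR c hc]
    simp only [sub_mul, add_mul, mul_add, mul_sub, smul_mul_assoc, mul_smul_comm,
      one_mul, mul_one, mul_assoc]
    module
  have mneg : ∀ f g : Module.End ℂ A, f * -g = -(f * g) := fun f g =>
    LinearMap.ext fun x => by simp
  have negm : ∀ f g : Module.End ℂ A, -f * g = -(f * g) := fun f g =>
    LinearMap.ext fun x => by simp
  -- final assembly
  simp only [← Module.End.mul_eq_comp]
  rw [show q θ μ ν • (LinearMap.mulLeft ℂ (b σ) * Om ν μ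
        - q θ σ ν • (LinearMap.mulLeft ℂ (b ν) * Om σ μ))
      = -(LinearMap.mulLeft ℂ (b σ) * Om μ ν)
        - (q θ μ ν * q θ σ ν) • (LinearMap.mulLeft ℂ (b ν) * Om σ μ) from by
    rw [smul_sub, smul_smul, ← mul_smul_comm, hOmvm, mneg]]
  rw [q_add_right θ σ μ ν]
  rw [hOm' μ hμ ν hν, hOm' σ hσ ν hν, hOm' σ hσ μ hμ, hBT μ hμ, hBT ν hν]
  simp only [mul_add, mul_sub, mul_neg, mneg, mul_smul_comm]
  rw [hTcL μ hμ ν hν, hB μ hμ ν hν, hB ν hν μ hμ]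
  simp only [sub_mul, add_mul, neg_mul, mul_neg, negm, mneg, mul_add, mul_sub, smul_mul_assoc,
    mul_smul_comm, one_mul, mul_one, mul_assoc]
  simp only [hswap σ hσ μ hμ, hswap σ hσ ν hν, hswap μ hμ ν hν]
  module



end Statement10
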